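/- For every integer N ≥ 1, all positive real link capacities ℓ_1, …, ℓ_{N+1}, and every schedule λ, the minimum over all cuts A ⊆ {1,…,N} of the cut value v_λ(A) equals min_{i∈{1,…,N+1}} (Σ_{s∈S_i} λ_s) · ℓ_i; that is, the minimization over all 2^N cuts can be restricted to the N+1 fundamental cuts, each of whose crossing set consists of a single link. -/
import Mathlib


open Finset

/-- Node state: node `0` always transmits (`true`), node `N+1` always receives (`false`),
and node `j` for `1 ≤ j ≤ N` takes the state of relay `j`. -/
def nodeState (N : ℕ) (s : Fin N → Bool) (j : ℕ) : Bool :=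
  if j = 0 then true else if h : j - 1 < N then s ⟨j - 1, h⟩ else false

/-- Link `i` (from node `i-1` to node `i`) is active in state `s`. -/
def linkActive (N : ℕ) (s : Fin N → Bool) (i : ℕ) : Prop :=
  nodeState N s (i - 1) = true ∧ nodeState N s i = false

instance (N : ℕ) (s : Fin N → Bool) (i : ℕ) : Decidable (linkActive N s i) := by
  unfold linkActive; infer_instance

/-- The total fraction of time `Σ_{s ∈ S_i} λ_s` in which link `i` is active. -/
noncomputable def linkTime (N : ℕ) (lam : (Fin N → Bool) → ℝ) (i : ℕ) : ℝ :=
  ∑ s ∈ Finset.univ.filter (fun s : Fin N → Bool => linkActive N s i), lam s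

/-- The rate `C^λ = min_{i ∈ [1,N+1]} (Σ_{s ∈ S_i} λ_s) ℓ_i` of a schedule. -/
noncomputable def rate (N : ℕ) (ℓ : ℕ → ℝ) (lam : (Fin N → Bool) → ℝ) : ℝ :=
  (Finset.Icc 1 (N + 1)).inf' ⟨1, by simp⟩ (fun i => linkTime N lam i * ℓ i)

/-- The crossing set `E(A)` of a cut `A ⊆ {1,…,N}`. -/
def crossing (N : ℕ) (A : Finset ℕ) : Finset ℕ :=
  (Finset.Icc 1 (N + 1)).filter
    (fun i => (i ∈ A ∨ i = N + 1) ∧ (i - 1 = 0 ∨ (i - 1 ∈ Finset.Icc 1 N ∧ i - 1 ∉ A)))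

/-- The value of cut `A` under schedule `lam`. -/
noncomputable def cutValue (N : ℕ) (ℓ : ℕ → ℝ) (lam : (Fin N → Bool) → ℝ)
    (A : Finset ℕ) : ℝ :=
  ∑ s : Fin N → Bool, lam s * ∑ i ∈ (crossing N A).filter (fun i => linkActive N s i), ℓ i

lemma cutValue_eq (N : ℕ) (ℓ : ℕ → ℝ) (lam : (Fin N → Bool) → ℝ) (A : Finset ℕ) :
    cutValue N ℓ lam A = ∑ i ∈ crossing N A, linkTime N lam i * ℓ i := by
  unfold cutValue linkTime
  simp_rw [Finset.mul_sum, Finset.sum_filter, Finset.sum_mul, ite_mul, zero_mul]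
  rw [Finset.sum_comm]

lemma crossing_Icc (N : ℕ) (i : ℕ) (hi : i ∈ Finset.Icc 1 (N + 1)) :
    crossing N (Finset.Icc i N) = {i} := by
  simp only [Finset.mem_Icc] at hi
  ext j
  simp only [crossing, Finset.mem_filter, Finset.mem_Icc, Finset.mem_singleton]
  omega

lemma crossing_nonempty (N : ℕ) (A : Finset ℕ) (hA : A ⊆ Finset.Icc 1 N) :
    (crossing N A).Nonempty := by
  have hT : (insert (N + 1) A).Nonempty := ⟨N + 1, Finset.mem_insert_self _ _⟩
  set i := (insert (N + 1) A).min' hT with hi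
  have hmem : i ∈ insert (N + 1) A := Finset.min'_mem _ hT
  have hiIcc : i ∈ Finset.Icc 1 (N + 1) := by
    rcases Finset.mem_insert.mp hmem with h | h
    · simp [h]
    · have := hA h; simp only [Finset.mem_Icc] at this ⊢; omega
  refine ⟨i, ?_⟩
  simp only [crossing, Finset.mem_filter]
  refine ⟨hiIcc, ?_, ?_⟩
  · rcases Finset.mem_insert.mp hmem with h | h
    · exact Or.inr h
    · exact Or.inl h
  · simp only [Finset.mem_Icc] at hiIcc
    by_cases h1 : i = 1
    · left; omega
    · right
      have hnot : i - 1 ∉ A := by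
        intro hc
        have hle : (insert (N + 1) A).min' hT ≤ i - 1 :=
          Finset.min'_le _ _ (Finset.mem_insert.mpr (Or.inr hc))
        omega
      refine ⟨?_, hnot⟩
      have : i ≤ N + 1 := hiIcc.2
      simp only [Finset.mem_Icc]; omega

lemma linkTime_nonneg (N : ℕ) (lam : (Fin N → Bool) → ℝ) (hlam : ∀ s, 0 ≤ lam s) (i : ℕ) :
    0 ≤ linkTime N lam i :=
  Finset.sum_nonneg fun s _ => hlam s

/-- The minimum over all `2^N` cuts of the cut value equals the minimum over the `N+1`
fundamental cuts, i.e. `min_{i ∈ [1,N+1]} (Σ_{s ∈ S_i} λ_s) ℓ_i`. -/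
theorem minCut_eq_fundamental (N : ℕ) (hN : 1 ≤ N) (ℓ : ℕ → ℝ)
    (hℓ : ∀ i ∈ Finset.Icc 1 (N + 1), 0 < ℓ i)
    (lam : (Fin N → Bool) → ℝ) (hlam : ∀ s, 0 ≤ lam s) (hsum : (∑ s, lam s) = 1) :
    ((Finset.Icc 1 N).powerset).inf' ⟨∅, by simp⟩ (cutValue N ℓ lam) =
      rate N ℓ lam := by
  apply le_antisymm
  · apply Finset.le_inf'
    intro i hi
    have hsub : Finset.Icc i N ∈ (Finset.Icc 1 N).powerset := by
      simp only [Finset.mem_powerset]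
      intro j hj
      simp only [Finset.mem_Icc] at *
      omega
    refine le_trans (Finset.inf'_le _ hsub) ?_
    rw [cutValue_eq, crossing_Icc N i hi, Finset.sum_singleton]
  · apply Finset.le_inf'
    intro A hA
    rw [cutValue_eq]
    obtain ⟨i, hiA⟩ := crossing_nonempty N A (Finset.mem_powerset.mp hA)
    have hiIcc : i ∈ Finset.Icc 1 (N + 1) := Finset.mem_filter.mp hiA |>.1
    refine le_trans (Finset.inf'_le _ hiIcc) ?_
    apply Finset.single_le_sum (f := fun j => linkTime N lam j * ℓ j) ?_ hiA
    intro j hj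
    have hjIcc : j ∈ Finset.Icc 1 (N + 1) := Finset.mem_filter.mp hj |>.1
    exact mul_nonneg (linkTime_nonneg N lam hlam j) (hℓ j hjIcc).le
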